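/- Let E be a complex Banach lattice, F ⊂ E a norm closed, order dense ideal in E, and T ∈ Z(E). Then the restriction T_F of T to F satisfies ‖T_F‖ = ‖T‖. -/

import Mathlib

open Filter Set

noncomputable section

/-- The disjoint complement `S^d = {x : |x| ⊓ |a| = 0 for all a ∈ S}` of a set `S`
in a Banach lattice. -/
def dComp {E : Type*} [NormedAddCommGroup E] [Lattice E] [HasSolidNorm E] [IsOrderedAddMonoid E] (S : Set E) : Set E :=
  {x | ∀ a ∈ S, |x| ⊓ |a| = 0}

/-- `a` is an atom: the band `{a}^{dd}` generated by `a` is one-dimensional. -/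
def IsAtomE {E : Type*} [NormedAddCommGroup E] [Lattice E] [HasSolidNorm E] [IsOrderedAddMonoid E] [NormedSpace ℂ E] (a : E) : Prop :=
  a ≠ 0 ∧ ∀ x ∈ dComp (dComp ({a} : Set E)), ∃ c : ℂ, x = c • a

/-- The set of positive atoms of norm one. -/
def posAtoms (E : Type*) [NormedAddCommGroup E] [Lattice E] [HasSolidNorm E] [IsOrderedAddMonoid E] [NormedSpace ℂ E] : Set E :=
  {a | IsAtomE a ∧ 0 < a ∧ ‖a‖ = 1}

/-- `T` belongs to the center `Z(E) = {T : |T| ≤ λ I for some λ ≥ 0}`;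
equivalently `|Tx| ≤ λ|x|` for all `x`. -/
def IsCentral {E : Type*} [NormedAddCommGroup E] [Lattice E] [HasSolidNorm E] [IsOrderedAddMonoid E] [NormedSpace ℂ E] (T : E →L[ℂ] E) : Prop :=
  ∃ c : ℝ, 0 ≤ c ∧ ∀ x : E, |T x| ≤ c • |x|

/-- The essential spectrum: the spectrum of `T + K(E)` in the Calkin algebra, i.e. the
set of `z` such that `T - z` is not invertible modulo the compact operators. -/
def essSpectrum {X : Type*} [NormedAddCommGroup X] [NormedSpace ℂ X] (T : X →L[ℂ] X) : Set ℂ :=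
  {z | ¬ ∃ S : X →L[ℂ] X, IsCompactOperator ⇑(S * (T - z • 1) - 1) ∧
      IsCompactOperator ⇑((T - z • 1) * S - 1)}

/-- The essential spectral radius, the spectral radius of `T + K(E)` in the Calkin algebra. -/
def essSpectralRadius {X : Type*} [NormedAddCommGroup X] [NormedSpace ℂ X] (T : X →L[ℂ] X) : ℝ :=
  sSup (norm '' essSpectrum T)

/-- The essential norm `‖T‖ₑ = inf{‖T - K‖ : K compact}`. -/
def essNorm {X : Type*} [NormedAddCommGroup X] [NormedSpace ℂ X] (T : X →L[ℂ] X) : ℝ :=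
  sInf ((fun K => ‖T - K‖) '' {K : X →L[ℂ] X | IsCompactOperator ⇑K})

/-- The spectral radius of `T`. -/
def specRadius {X : Type*} [NormedAddCommGroup X] [NormedSpace ℂ X] (T : X →L[ℂ] X) : ℝ :=
  sSup (norm '' spectrum ℂ T)

/-! ### Auxiliary lattice lemmas -/

section LatticeHelpers

variable {E : Type*} [NormedAddCommGroup E] [Lattice E] [HasSolidNorm E] [IsOrderedAddMonoid E]

lemma stmt15.sub_inf_eq (a b : E) : a - a ⊓ b = (a - b)⁺ := by
  have h2 : a ⊓ b + (a ⊔ b) = a + b := inf_add_sup a b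
  have h1 : (a - b)⁺ = (a ⊔ b) - b := by
    rw [posPart_def]
    have h := sup_sub a b b
    rw [sub_self] at h
    exact h.symm
  have h3 : a ⊔ b = a + b - a ⊓ b := by rw [← h2]; abel
  rw [h1, h3]; abel

lemma stmt15.abs_of_nonneg' {a : E} (h : 0 ≤ a) : |a| = a := by
  rw [← posPart_add_negPart a, negPart_eq_zero.2 h, add_zero, posPart_eq_self.2 h]

lemma stmt15.posPart_of_disj {p q : E} (h : p ⊓ q = 0) : (p - q)⁺ = p := by
  rw [← stmt15.sub_inf_eq p q, h, sub_zero]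

lemma stmt15.negPart_of_disj {p q : E} (h : q ⊓ p = 0) : (p - q)⁻ = q := by
  have h1 : (p - q)⁻ = (q - p)⁺ := by rw [negPart_def, posPart_def, neg_sub]
  rw [h1, stmt15.posPart_of_disj h]

lemma stmt15.inf_le_add_inf {x p q : E} (hx : 0 ≤ x) (hp : 0 ≤ p) (hq : 0 ≤ q) :
    x ⊓ (p + q) ≤ x ⊓ p + x ⊓ q := by
  have h1 : x ⊓ (p + q) - q ≤ x ⊓ p := by
    refine le_inf ((sub_le_self _ hq).trans inf_le_left) ?_
    have h := sub_le_sub_right (inf_le_right : x ⊓ (p + q) ≤ p + q) q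
    simpa using h
  have h2 : x ⊓ (p + q) - x ⊓ p ≤ x ⊓ q :=
    le_inf ((sub_le_self _ (le_inf hx hp)).trans inf_le_left) (sub_le_comm.1 h1)
  exact sub_le_iff_le_add'.1 h2

lemma stmt15.inf_nsmul_le {x p : E} (hx : 0 ≤ x) (hp : 0 ≤ p) :
    ∀ K : ℕ, x ⊓ (K • p) ≤ K • (x ⊓ p)
  | 0 => by simpa using inf_le_right
  | (K + 1) => by
    calc x ⊓ ((K + 1) • p) = x ⊓ (K • p + p) := by rw [succ_nsmul]
      _ ≤ x ⊓ (K • p) + x ⊓ p := stmt15.inf_le_add_inf hx (nsmul_nonneg hp K) hp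
      _ ≤ K • (x ⊓ p) + x ⊓ p := add_le_add_left (stmt15.inf_nsmul_le hx hp K) _
      _ = (K + 1) • (x ⊓ p) := (succ_nsmul _ K).symm

lemma stmt15.disj_nsmul {a b : E} (ha : 0 ≤ a) (hb : 0 ≤ b) (h : a ⊓ b = 0) (K L : ℕ) :
    (K • a) ⊓ (L • b) = 0 := by
  have h0 : (0 : E) ≤ (K • a) ⊓ (L • b) := le_inf (nsmul_nonneg ha K) (nsmul_nonneg hb L)
  have h1 : (K • a) ⊓ (L • b) ≤ L • ((K • a) ⊓ b) :=
    stmt15.inf_nsmul_le (nsmul_nonneg ha K) hb L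
  have h2 : (K • a) ⊓ b ≤ K • (a ⊓ b) := by
    rw [inf_comm]
    calc b ⊓ (K • a) ≤ K • (b ⊓ a) := stmt15.inf_nsmul_le hb ha K
      _ = K • (a ⊓ b) := by rw [inf_comm]
  have h3 : (K • a) ⊓ (L • b) ≤ 0 := by
    refine h1.trans ?_
    have h4 : (K • a) ⊓ b ≤ 0 := by rw [h] at h2; simpa using h2
    simpa using nsmul_nonpos h4 L
  exact le_antisymm h3 h0

lemma stmt15.semiclosed {n : ℕ} (hn : 0 < n) {z : E} (h : 0 ≤ n • z) : 0 ≤ z := by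
  have hd : (n • z⁺) ⊓ (n • z⁻) = 0 :=
    stmt15.disj_nsmul (posPart_nonneg z) (negPart_nonneg z) (posPart_inf_negPart_eq_zero z) n n
  have hz : n • z = n • z⁺ - n • z⁻ := by rw [← smul_sub, posPart_sub_negPart]
  have h3 : (n • z)⁻ = n • z⁻ := by
    rw [hz]
    exact stmt15.negPart_of_disj (by rw [inf_comm]; exact hd)
  have h4 : n • z⁻ = 0 := by rw [← h3]; exact negPart_eq_zero.2 h
  obtain ⟨m, rfl⟩ := Nat.exists_eq_succ_of_ne_zero hn.ne'
  have h5 : z⁻ ≤ (m + 1) • z⁻ := by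
    rw [succ_nsmul]
    exact le_add_of_nonneg_left (nsmul_nonneg (negPart_nonneg z) m)
  have h6 : z⁻ = 0 := le_antisymm (h5.trans_eq h4) (negPart_nonneg z)
  exact negPart_eq_zero.1 h6

lemma stmt15.nsmul_posPart_inf_le {a b : E} (ha : 0 ≤ a) (hb : 0 ≤ b) (n : ℕ) :
    n • ((a - n • b)⁺ ⊓ b) ≤ a := by
  set P := (a - n • b)⁺ ⊓ b with hP
  have hP0 : 0 ≤ P := le_inf (posPart_nonneg _) hb
  have hPr : P ⊓ (a - n • b)⁻ = 0 := by
    refine le_antisymm ?_ (le_inf hP0 (negPart_nonneg _))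
    calc P ⊓ (a - n • b)⁻ ≤ (a - n • b)⁺ ⊓ (a - n • b)⁻ := inf_le_inf_right _ inf_le_left
      _ = 0 := posPart_inf_negPart_eq_zero _
  have hnr : (n • P) ⊓ ((a - n • b)⁻) = 0 := by
    have h := stmt15.disj_nsmul hP0 (negPart_nonneg _) hPr n 1
    simpa using h
  have hle : n • P ≤ a + (a - n • b)⁻ := by
    have h1 : n • P ≤ n • b := nsmul_le_nsmul_right inf_le_right n
    have h3 : n • b - a ≤ (a - n • b)⁻ := by
      rw [negPart_def, neg_sub]; exact le_sup_left
    have h2 : n • b ≤ a + (a - n • b)⁻ := by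
      calc n • b = a + (n • b - a) := by abel
        _ ≤ a + (a - n • b)⁻ := add_le_add_right h3 a
    exact h1.trans h2
  calc n • P = (n • P) ⊓ (a + (a - n • b)⁻) := (inf_eq_left.2 hle).symm
    _ ≤ (n • P) ⊓ a + (n • P) ⊓ (a - n • b)⁻ :=
        stmt15.inf_le_add_inf (nsmul_nonneg hP0 n) ha (negPart_nonneg _)
    _ = (n • P) ⊓ a := by rw [hnr, add_zero]
    _ ≤ a := inf_le_right

lemma stmt15.abs_add_disj {x y : E} (h : |x| ⊓ |y| = 0) : |x + y| = |x| + |y| := by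
  refine le_antisymm (abs_add_le x y) ?_
  have h1 : |x| - |y| ≤ |x + y| := by
    have h2 : |x| ≤ |x + y| + |y| := by
      have h4 : x = x + y + -y := by abel
      calc |x| = |x + y + -y| := by rw [← h4]
        _ ≤ |x + y| + |-y| := abs_add_le _ _
        _ = |x + y| + |y| := by rw [abs_neg]
    exact sub_le_iff_le_add.2 h2
  have h2 : |y| - |x| ≤ |x + y| := by
    have h3 : |y| ≤ |x + y| + |x| := by
      have h4 : y = x + y + -x := by abel
      calc |y| = |x + y + -x| := by rw [← h4]
        _ ≤ |x + y| + |-x| := abs_add_le _ _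
        _ = |x + y| + |x| := by rw [abs_neg]
    exact sub_le_iff_le_add.2 h3
  have habs : |(|x| - |y|)| ≤ |x + y| := by
    rw [abs_le']
    exact ⟨h1, by rw [neg_sub]; exact h2⟩
  have hid : |x| + |y| = |(|x| - |y|)| + 2 • (|x| ⊓ |y|) := by
    have e1 : (|x| - |y|)⁺ = |x| - |x| ⊓ |y| := (stmt15.sub_inf_eq _ _).symm
    have e2 : (|x| - |y|)⁻ = |y| - |y| ⊓ |x| := by
      have h5 : (|x| - |y|)⁻ = (|y| - |x|)⁺ := by rw [negPart_def, posPart_def, neg_sub]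
      rw [h5, ← stmt15.sub_inf_eq]
    calc |x| + |y|
        = (|x| - |x| ⊓ |y|) + (|y| - |y| ⊓ |x|) + 2 • (|x| ⊓ |y|) := by
          rw [two_nsmul]
          have h6 : |y| ⊓ |x| = |x| ⊓ |y| := inf_comm _ _
          rw [h6]; abel
      _ = (|x| - |y|)⁺ + (|x| - |y|)⁻ + 2 • (|x| ⊓ |y|) := by rw [e1, e2]
      _ = |(|x| - |y|)| + 2 • (|x| ⊓ |y|) := by rw [posPart_add_negPart]
  rw [hid, h]
  simpa using habs

lemma stmt15.abs_sub_disj {x y : E} (h : |x| ⊓ |y| = 0) : |x - y| = |x| + |y| := by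
  have h1 := stmt15.abs_add_disj (x := x) (y := -y) (by simpa using h)
  simpa [sub_eq_add_neg] using h1

end LatticeHelpers

/-! ### Real scalar multiplication is order compatible -/

section ScalarHelpers

variable {E : Type*} [NormedAddCommGroup E] [Lattice E] [HasSolidNorm E] [IsOrderedAddMonoid E] [NormedSpace ℂ E]

lemma stmt15.rsmul_nonneg {r : ℝ} (hr : 0 ≤ r) {x : E} (hx : 0 ≤ x) : 0 ≤ r • x := by
  have hrat : ∀ q : ℚ, 0 ≤ q → 0 ≤ (q : ℝ) • x := by
    intro q hq
    refine stmt15.semiclosed q.den_pos (z := (q : ℝ) • x) ?_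
    have hcast : (q.den : ℕ) • ((q : ℝ) • x) = (q.num.toNat : ℕ) • x := by
      rw [← Nat.cast_smul_eq_nsmul ℝ q.den, ← Nat.cast_smul_eq_nsmul ℝ q.num.toNat, smul_smul]
      congr 1
      have h1 : (q.den : ℚ) * q = (q.num : ℚ) := by rw [mul_comm]; exact Rat.mul_den_eq_num q
      have h2 : (q.den : ℝ) * (q : ℝ) = ((q.num : ℤ) : ℝ) := by
        exact_mod_cast congrArg (fun t : ℚ => (t : ℝ)) h1
      rw [h2]
      have h3 : ((q.num.toNat : ℤ)) = q.num := Int.toNat_of_nonneg (Rat.num_nonneg.2 hq)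
      exact_mod_cast congrArg (fun t : ℤ => (t : ℝ)) h3.symm
    rw [hcast]
    exact nsmul_nonneg hx _
  have hseq : ∀ k : ℕ, ∃ q : ℚ, r < (q : ℝ) ∧ (q : ℝ) < r + 1 / (k + 1) := by
    intro k
    refine exists_rat_btwn ?_
    have h : (0 : ℝ) < 1 / ((k : ℝ) + 1) := by positivity
    linarith
  choose q hq1 hq2 using hseq
  have htend : Tendsto (fun k : ℕ => ((q k : ℝ))) atTop (nhds r) := by
    have h1 : Tendsto (fun k : ℕ => r + 1 / ((k : ℝ) + 1)) atTop (nhds (r + 0)) :=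
      tendsto_const_nhds.add tendsto_one_div_add_atTop_nhds_zero_nat
    rw [add_zero] at h1
    exact tendsto_of_tendsto_of_tendsto_of_le_of_le tendsto_const_nhds h1
      (fun k => (hq1 k).le) (fun k => (hq2 k).le)
  have hlim : Tendsto (fun k => (q k : ℝ) • x) atTop (nhds (r • x)) := htend.smul_const x
  refine ge_of_tendsto' hlim fun k => ?_
  refine hrat (q k) ?_
  have h : (0 : ℝ) ≤ (q k : ℝ) := hr.trans (hq1 k).le
  exact_mod_cast h

lemma stmt15.rsmul_mono {r : ℝ} (hr : 0 ≤ r) {a b : E} (h : a ≤ b) : r • a ≤ r • b := by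
  have h1 := stmt15.rsmul_nonneg hr (sub_nonneg.2 h)
  rw [smul_sub] at h1
  exact sub_nonneg.1 h1

lemma stmt15.rsmul_le_rsmul {r s : ℝ} (hr : 0 ≤ r) (hrs : r ≤ s) {a : E} (ha : 0 ≤ a) :
    r • a ≤ s • a := by
  have h1 := stmt15.rsmul_nonneg (sub_nonneg.2 hrs) ha
  rw [sub_smul] at h1
  exact sub_nonneg.1 h1

lemma stmt15.rsmul_le_nsmul {r : ℝ} (hr : 0 ≤ r) {K : ℕ} (hK : r ≤ K) {a : E} (ha : 0 ≤ a) :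
    r • a ≤ K • a := by
  have h1 := stmt15.rsmul_le_rsmul hr hK ha
  rwa [Nat.cast_smul_eq_nsmul] at h1

end ScalarHelpers

/-! ### The core ladder estimate -/

/-- If `T` is central with `|Tx| ≤ c • |x|`, and `‖Tv‖ ≤ M‖v‖` for every `v` in an ideal `F`,
then `|Ty| ≤ μ • y` for every positive `y ∈ F` and every `μ > M`. -/
lemma stmt15.core {E : Type*} [NormedAddCommGroup E] [Lattice E] [HasSolidNorm E] [IsOrderedAddMonoid E] [NormedSpace ℂ E]
    (F : Submodule ℂ E) (hideal : ∀ x y : E, y ∈ F → |x| ≤ |y| → x ∈ F)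
    (T : E →L[ℂ] E) (c : ℝ) (hc : 0 ≤ c) (hTc : ∀ x : E, |T x| ≤ c • |x|)
    (M : ℝ) (hM0 : 0 ≤ M) (hFb : ∀ v ∈ F, ‖T v‖ ≤ M * ‖v‖)
    {y : E} (hyF : y ∈ F) (hy : 0 ≤ y) {μ : ℝ} (hμ : M < μ) :
    |T y| ≤ μ • y := by
  classical
  set c₀ : ℝ := max c 1 with hc₀def
  have hc₀1 : (1 : ℝ) ≤ c₀ := le_max_right _ _
  have hc₀0 : (0 : ℝ) < c₀ := lt_of_lt_of_le one_pos hc₀1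
  have hcc₀ : c ≤ c₀ := le_max_left _ _
  set μ₁ : ℝ := (M + μ) / 2 with hμ₁def
  have hμ₁M : M < μ₁ := by rw [hμ₁def]; linarith
  have hμ₁μ : μ₁ < μ := by rw [hμ₁def]; linarith
  have hμ₁0 : (0 : ℝ) < μ₁ := lt_of_le_of_lt hM0 hμ₁M
  have hμ0 : (0 : ℝ) ≤ μ := (hM0.trans_lt hμ).le
  set δ : ℝ := μ - μ₁ with hδdef
  have hδ0 : (0 : ℝ) < δ := by rw [hδdef]; linarith
  set A : E := |T y| with hAdef
  have hA0 : 0 ≤ A := abs_nonneg _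
  have hAy : A ≤ c₀ • y := by
    have h1 := hTc y
    rw [stmt15.abs_of_nonneg' hy] at h1
    exact h1.trans (stmt15.rsmul_le_rsmul hc hcc₀ hy)
  set u : E := (A - μ • y)⁺ with hudef
  have hu0 : 0 ≤ u := posPart_nonneg _
  set ε : ℝ := min (1 / c₀) (1 / δ) with hεdef
  have hε0 : (0 : ℝ) < ε := lt_min (by positivity) (by positivity)
  have key : ∀ n : ℕ, 0 < n → ε * ‖u‖ ≤ (M / μ₁) ^ n * ‖y‖ := by
    intro n hn
    have hn' : (0 : ℝ) < n := by exact_mod_cast hn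
    set Δ : ℝ := δ / n with hΔdef
    have hΔ0 : (0 : ℝ) < Δ := by positivity
    set κ : ℝ := 1 / Δ with hκdef
    have hκ0 : (0 : ℝ) < κ := by positivity
    set lev : ℕ → ℝ := fun j => μ₁ + j * Δ with hlevdef
    have hlev0 : ∀ j, (0 : ℝ) < lev j := by
      intro j
      have h : (0 : ℝ) ≤ j * Δ := by positivity
      simp only [hlevdef]
      linarith
    have hlev1 : ∀ j, μ₁ ≤ lev j := by
      intro j
      have h : (0 : ℝ) ≤ j * Δ := by positivity
      simp only [hlevdef]
      linarith
    have hlevn : lev n = μ := by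
      simp only [hlevdef, hΔdef]
      rw [mul_comm, div_mul_cancel₀ _ (ne_of_gt hn'), hδdef]
      ring
    set s : ℕ → E := fun j => A - lev j • y with hsdef
    set w : ℕ → E := fun j => y ⊓ (κ • (s j)⁺) with hwdef
    have hw0 : ∀ j, 0 ≤ w j := fun j =>
      le_inf hy (stmt15.rsmul_nonneg hκ0.le (posPart_nonneg _))
    have hwy : ∀ j, w j ≤ y := fun j => inf_le_left
    have hwF : ∀ j, w j ∈ F := by
      intro j
      refine hideal _ y hyF ?_
      rw [stmt15.abs_of_nonneg' (hw0 j), stmt15.abs_of_nonneg' hy]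
      exact hwy j
    have step : ∀ j : ℕ, lev (j + 1) • w (j + 1) ≤ |T (w j)| := by
      intro j
      set d : E := y - w j with hddef
      have hd_eq : d = (y - κ • (s j)⁺)⁺ := by
        rw [hddef, hwdef]; exact stmt15.sub_inf_eq y _
      have hd0 : 0 ≤ d := hd_eq ▸ posPart_nonneg _
      have hκΔ : κ * Δ = 1 := by
        rw [hκdef]; field_simp
      have hsj1 : κ • s j = κ • s (j + 1) + y := by
        have h1 : s j - s (j + 1) = Δ • y := by
          simp only [hsdef]
          have h2 : lev (j + 1) - lev j = Δ := by
            simp only [hlevdef]; push_cast; ring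
          rw [← h2, sub_smul]; abel
        have h3 : κ • (s j - s (j + 1)) = y := by
          rw [h1, smul_smul, hκΔ, one_smul]
        rw [smul_sub] at h3
        rw [← h3]; abel
      have hd_le : d ≤ κ • (s (j + 1))⁻ := by
        have h3 : κ • s j ≤ κ • (s j)⁺ := stmt15.rsmul_mono hκ0.le (le_posPart _)
        have h4 : y - κ • (s j)⁺ ≤ y - κ • s j := sub_le_sub_left h3 y
        have h5 : y - κ • s j = -(κ • s (j + 1)) := by rw [hsj1]; abel
        have h6 : -(κ • s (j + 1)) ≤ κ • (s (j + 1))⁻ := by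
          rw [← smul_neg]
          refine stmt15.rsmul_mono hκ0.le ?_
          rw [negPart_def]; exact le_sup_left
        calc d = (y - κ • (s j)⁺)⁺ := hd_eq
          _ ≤ (κ • (s (j + 1))⁻)⁺ := posPart_mono (h4.trans (h5.le.trans h6))
          _ = κ • (s (j + 1))⁻ :=
              posPart_eq_self.2 (stmt15.rsmul_nonneg hκ0.le (negPart_nonneg _))
      have hTd : |T d| ≤ (c * κ) • (s (j + 1))⁻ := by
        have h1 := hTc d
        rw [stmt15.abs_of_nonneg' hd0] at h1
        refine h1.trans ?_
        have h2 := stmt15.rsmul_mono hc hd_le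
        rwa [smul_smul] at h2
      have hTy_split : A = lev (j + 1) • y + (s (j + 1))⁺ - (s (j + 1))⁻ := by
        have h1 : (s (j + 1))⁺ - (s (j + 1))⁻ = s (j + 1) := posPart_sub_negPart _
        have h2 : s (j + 1) = A - lev (j + 1) • y := rfl
        have h3 : lev (j + 1) • y + (s (j + 1))⁺ - (s (j + 1))⁻
            = lev (j + 1) • y + ((s (j + 1))⁺ - (s (j + 1))⁻) := by abel
        rw [h3, h1, h2]; abel
      have h7 : A ≤ |T (w j)| + |T d| := by
        have h8 : T y = T (w j) + T d := by
          rw [← map_add]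
          congr 1
          rw [hddef]; abel
        calc A = |T (w j) + T d| := by rw [hAdef, h8]
          _ ≤ |T (w j)| + |T d| := abs_add_le _ _
      have hTw_ge : lev (j + 1) • w (j + 1) - (1 + c * κ) • (s (j + 1))⁻ ≤ |T (w j)| := by
        have h8 : A - |T d| ≤ |T (w j)| := sub_le_iff_le_add.2 h7
        refine le_trans ?_ h8
        have h9 : lev (j + 1) • w (j + 1) ≤ lev (j + 1) • y + (s (j + 1))⁺ :=
          (stmt15.rsmul_mono (hlev0 _).le (hwy (j + 1))).trans
            (le_add_of_nonneg_right (posPart_nonneg _))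
        have h10 : (1 + c * κ) • (s (j + 1))⁻ = (s (j + 1))⁻ + (c * κ) • (s (j + 1))⁻ := by
          rw [add_smul, one_smul]
        rw [h10, hTy_split]
        have h11 : lev (j + 1) • w (j + 1) - ((s (j + 1))⁻ + (c * κ) • (s (j + 1))⁻)
            = (lev (j + 1) • w (j + 1) - (s (j + 1))⁻) - (c * κ) • (s (j + 1))⁻ := by abel
        have h12 : lev (j + 1) • y + (s (j + 1))⁺ - (s (j + 1))⁻ - |T d|
            = ((lev (j + 1) • y + (s (j + 1))⁺) - (s (j + 1))⁻) - |T d| := by abel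
        rw [h11, h12]
        exact sub_le_sub (sub_le_sub_right h9 _) hTd
      have hdisj : (lev (j + 1) • w (j + 1)) ⊓ ((1 + c * κ) • (s (j + 1))⁻) = 0 := by
        obtain ⟨K, hK⟩ := exists_nat_ge (lev (j + 1) * κ)
        obtain ⟨L, hL⟩ := exists_nat_ge (1 + c * κ)
        have hlκ0 : (0 : ℝ) ≤ lev (j + 1) * κ := by positivity
        have h1cκ0 : (0 : ℝ) ≤ 1 + c * κ := by positivity
        have h11 : lev (j + 1) • w (j + 1) ≤ K • (s (j + 1))⁺ := by
          calc lev (j + 1) • w (j + 1)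
              ≤ lev (j + 1) • (κ • (s (j + 1))⁺) :=
                stmt15.rsmul_mono (hlev0 _).le inf_le_right
            _ = (lev (j + 1) * κ) • (s (j + 1))⁺ := smul_smul _ _ _
            _ ≤ K • (s (j + 1))⁺ := stmt15.rsmul_le_nsmul hlκ0 hK (posPart_nonneg _)
        have h12 : (1 + c * κ) • (s (j + 1))⁻ ≤ L • (s (j + 1))⁻ :=
          stmt15.rsmul_le_nsmul h1cκ0 hL (negPart_nonneg _)
        have h13 : (K • (s (j + 1))⁺) ⊓ (L • (s (j + 1))⁻) = 0 :=
          stmt15.disj_nsmul (posPart_nonneg _) (negPart_nonneg _)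
            (posPart_inf_negPart_eq_zero _) K L
        refine le_antisymm ((inf_le_inf h11 h12).trans h13.le)
          (le_inf (stmt15.rsmul_nonneg (hlev0 _).le (hw0 _))
            (stmt15.rsmul_nonneg h1cκ0 (negPart_nonneg _)))
      have h14 : (lev (j + 1) • w (j + 1) - (1 + c * κ) • (s (j + 1))⁻)⁺ ≤ |T (w j)| := by
        rw [posPart_def]
        exact sup_le hTw_ge (abs_nonneg _)
      rwa [stmt15.posPart_of_disj hdisj] at h14
    have hstepnorm : ∀ j : ℕ, μ₁ * ‖w (j + 1)‖ ≤ M * ‖w j‖ := by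
      intro j
      have h1 : ‖lev (j + 1) • w (j + 1)‖ ≤ ‖T (w j)‖ := by
        have h2 : |lev (j + 1) • w (j + 1)| ≤ |(|T (w j)|)| := by
          rw [abs_abs, stmt15.abs_of_nonneg' (stmt15.rsmul_nonneg (hlev0 _).le (hw0 _))]
          exact step j
        have h3 := norm_le_norm_of_abs_le_abs h2
        rwa [norm_abs_eq_norm] at h3
      have h4 : ‖lev (j + 1) • w (j + 1)‖ = lev (j + 1) * ‖w (j + 1)‖ := by
        rw [norm_smul, Real.norm_eq_abs, abs_of_pos (hlev0 _)]
      calc μ₁ * ‖w (j + 1)‖ ≤ lev (j + 1) * ‖w (j + 1)‖ :=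
            mul_le_mul_of_nonneg_right (hlev1 _) (norm_nonneg _)
        _ = ‖lev (j + 1) • w (j + 1)‖ := h4.symm
        _ ≤ ‖T (w j)‖ := h1
        _ ≤ M * ‖w j‖ := hFb _ (hwF j)
    have hgeo : ∀ j : ℕ, ‖w j‖ ≤ (M / μ₁) ^ j * ‖y‖ := by
      intro j
      induction j with
      | zero =>
        simp only [pow_zero, one_mul]
        refine norm_le_norm_of_abs_le_abs ?_
        rw [stmt15.abs_of_nonneg' (hw0 0), stmt15.abs_of_nonneg' hy]
        exact hwy 0
      | succ j ih =>
        have h1 : ‖w (j + 1)‖ ≤ (M / μ₁) * ‖w j‖ := by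
          rw [div_mul_eq_mul_div, le_div_iff₀ hμ₁0, mul_comm (‖w (j + 1)‖)]
          exact hstepnorm j
        calc ‖w (j + 1)‖ ≤ (M / μ₁) * ‖w j‖ := h1
          _ ≤ (M / μ₁) * ((M / μ₁) ^ j * ‖y‖) :=
            mul_le_mul_of_nonneg_left ih (by positivity)
          _ = (M / μ₁) ^ (j + 1) * ‖y‖ := by ring
    have hbot : ε • u ≤ w n := by
      have hsn : (s n)⁺ = u := by
        simp only [hsdef, hudef, hlevn]
      have h16 : (1 / c₀) • u ≤ y := by
        have hu_le : u ≤ c₀ • y := by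
          have h17 : A - μ • y ≤ c₀ • y :=
            (sub_le_self _ (stmt15.rsmul_nonneg hμ0 hy)).trans hAy
          calc u = (A - μ • y)⁺ := rfl
            _ ≤ (c₀ • y)⁺ := posPart_mono h17
            _ = c₀ • y := posPart_eq_self.2 (stmt15.rsmul_nonneg hc₀0.le hy)
        calc (1 / c₀) • u ≤ (1 / c₀) • (c₀ • y) := stmt15.rsmul_mono (by positivity) hu_le
          _ = y := by rw [smul_smul, one_div_mul_cancel (ne_of_gt hc₀0), one_smul]
      have h17 : (1 / δ) • u ≤ κ • u := by
        refine stmt15.rsmul_le_rsmul (by positivity) ?_ hu0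
        rw [hκdef, hΔdef, one_div_div]
        have hn1 : (1 : ℝ) ≤ n := by exact_mod_cast hn
        gcongr
      refine le_inf ((stmt15.rsmul_le_rsmul hε0.le (min_le_left _ _) hu0).trans h16) ?_
      have h18 : ε • u ≤ κ • u :=
        (stmt15.rsmul_le_rsmul hε0.le (min_le_right _ _) hu0).trans h17
      calc ε • u ≤ κ • u := h18
        _ = κ • (s n)⁺ := by rw [hsn]
    have h18 : ε * ‖u‖ ≤ ‖w n‖ := by
      have h19 : |ε • u| ≤ |w n| := by
        rw [stmt15.abs_of_nonneg' (stmt15.rsmul_nonneg hε0.le hu0),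
          stmt15.abs_of_nonneg' (hw0 n)]
        exact hbot
      have h20 := norm_le_norm_of_abs_le_abs h19
      rwa [norm_smul, Real.norm_eq_abs, abs_of_pos hε0] at h20
    exact h18.trans (hgeo n)
  have hr1 : M / μ₁ < 1 := (div_lt_one hμ₁0).2 hμ₁M
  have hr0 : (0 : ℝ) ≤ M / μ₁ := by positivity
  have hlim : Tendsto (fun n : ℕ => (M / μ₁) ^ n * ‖y‖) atTop (nhds 0) := by
    have h1 := (tendsto_pow_atTop_nhds_zero_of_lt_one hr0 hr1).mul_const ‖y‖
    simpa using h1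
  have hεu : ε * ‖u‖ ≤ 0 := by
    refine ge_of_tendsto hlim ?_
    filter_upwards [eventually_gt_atTop 0] with n hn
    exact key n hn
  have hu_norm : ‖u‖ = 0 := by
    have h1 : 0 ≤ ‖u‖ := norm_nonneg u
    nlinarith
  have hu_zero : u = 0 := norm_eq_zero.1 hu_norm
  have hfinal : A - μ • y ≤ 0 := by
    have h1 := le_posPart (A - μ • y)
    rw [← hudef, hu_zero] at h1
    exact h1
  exact sub_nonpos.1 hfinal


/-- Let `E` be a complex Banach lattice, `F ⊆ E` a norm closed, order
dense ideal in `E`, and `T ∈ Z(E)`.  Then the restriction `T_F` of `T` to `F` (which maps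
`F` into itself since `T` is central) satisfies
`‖T_F‖ = sup{‖Tx‖ : x ∈ F, ‖x‖ ≤ 1} = ‖T‖`. -/
theorem stmt15 {E : Type*} [NormedAddCommGroup E] [Lattice E] [HasSolidNorm E] [IsOrderedAddMonoid E] [NormedSpace ℂ E] [CompleteSpace E]
    (F : Submodule ℂ E) (hclosed : IsClosed (F : Set E))
    (hideal : ∀ x y : E, y ∈ F → |x| ≤ |y| → x ∈ F)
    (hdense : ∀ x : E, 0 < x → ∃ y ∈ F, 0 < y ∧ y ≤ x)
    (T : E →L[ℂ] E) (hT : IsCentral T) :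
    sSup ((fun x => ‖T x‖) '' {x : E | x ∈ F ∧ ‖x‖ ≤ 1}) = ‖T‖ := by
  classical
  obtain ⟨c, hc, hTc⟩ := hT
  set S : Set ℝ := (fun x => ‖T x‖) '' {x : E | x ∈ F ∧ ‖x‖ ≤ 1} with hSdef
  set M : ℝ := sSup S with hMdef
  have hbdd : BddAbove S := by
    refine ⟨‖T‖, ?_⟩
    rintro r ⟨x, ⟨hxF, hx1⟩, rfl⟩
    calc ‖T x‖ ≤ ‖T‖ * ‖x‖ := T.le_opNorm x
      _ ≤ ‖T‖ * 1 := mul_le_mul_of_nonneg_left hx1 (norm_nonneg _)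
      _ = ‖T‖ := mul_one _
  have hS0 : (0 : ℝ) ∈ S := by
    refine ⟨0, ⟨F.zero_mem, by simp⟩, by simp⟩
  have hM0 : 0 ≤ M := le_csSup hbdd hS0
  have hFb : ∀ v ∈ F, ‖T v‖ ≤ M * ‖v‖ := by
    intro v hv
    rcases eq_or_ne v 0 with rfl | hv0
    · simp
    · have hnv : (0 : ℝ) < ‖v‖ := norm_pos_iff.2 hv0
      set x : E := (‖v‖⁻¹ : ℝ) • v with hxdef
      have hxF : x ∈ F := by
        have h1 : x = ((‖v‖⁻¹ : ℝ) : ℂ) • v := by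
          rw [hxdef, Complex.coe_smul]
        rw [h1]
        exact F.smul_mem _ hv
      have hx1 : ‖x‖ ≤ 1 := by
        rw [hxdef, norm_smul, Real.norm_eq_abs, abs_of_pos (by positivity)]
        rw [inv_mul_cancel₀ (ne_of_gt hnv)]
      have hmem : ‖T x‖ ∈ S := ⟨x, ⟨hxF, hx1⟩, rfl⟩
      have hle : ‖T x‖ ≤ M := le_csSup hbdd hmem
      have hTx : T x = (‖v‖⁻¹ : ℝ) • T v := by
        rw [hxdef]
        rw [← Complex.coe_smul, ← Complex.coe_smul, map_smul]
      rw [hTx, norm_smul, Real.norm_eq_abs, abs_of_pos (by positivity)] at hle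
      calc ‖T v‖ = ‖v‖ * (‖v‖⁻¹ * ‖T v‖) := by
            field_simp
        _ ≤ ‖v‖ * M := mul_le_mul_of_nonneg_left hle hnv.le
        _ = M * ‖v‖ := mul_comm _ _
  have hcore : ∀ v ∈ F, ∀ μ : ℝ, M < μ → |T v| ≤ μ • |v| := by
    intro v hv μ hμ'
    have havF : |v| ∈ F := hideal _ v hv (by rw [abs_abs])
    have h1 : |T (|v|)| ≤ μ • |v| :=
      stmt15.core F hideal T c hc hTc M hM0 hFb havF (abs_nonneg v) hμ'
    have hpm : v⁺ ⊓ v⁻ = 0 := posPart_inf_negPart_eq_zero v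
    obtain ⟨K, hK⟩ := exists_nat_ge c
    have hTp : |T (v⁺)| ≤ K • v⁺ := by
      have h2 := hTc (v⁺)
      rw [stmt15.abs_of_nonneg' (posPart_nonneg v)] at h2
      exact h2.trans (stmt15.rsmul_le_nsmul hc hK (posPart_nonneg v))
    have hTn : |T (v⁻)| ≤ K • v⁻ := by
      have h2 := hTc (v⁻)
      rw [stmt15.abs_of_nonneg' (negPart_nonneg v)] at h2
      exact h2.trans (stmt15.rsmul_le_nsmul hc hK (negPart_nonneg v))
    have hdTT : |T (v⁺)| ⊓ |T (v⁻)| = 0 := by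
      refine le_antisymm ?_ (le_inf (abs_nonneg _) (abs_nonneg _))
      calc |T (v⁺)| ⊓ |T (v⁻)| ≤ (K • v⁺) ⊓ (K • v⁻) := inf_le_inf hTp hTn
        _ = 0 := stmt15.disj_nsmul (posPart_nonneg v) (negPart_nonneg v) hpm K K
    have habs1 : |T v| = |T (v⁺)| + |T (v⁻)| := by
      have h3 : T v = T (v⁺) - T (v⁻) := by
        rw [← map_sub]
        congr 1
        exact (posPart_sub_negPart v).symm
      rw [h3]
      exact stmt15.abs_sub_disj hdTT
    have habs2 : |T (|v|)| = |T (v⁺)| + |T (v⁻)| := by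
      have h3 : T (|v|) = T (v⁺) + T (v⁻) := by
        rw [← map_add]
        congr 1
        exact (posPart_add_negPart v).symm
      rw [h3]
      exact stmt15.abs_add_disj hdTT
    rw [habs1, ← habs2]
    exact h1
  have hmain : ∀ z : E, ∀ lam : ℝ, M < lam → |T z| ≤ lam • |z| := by
    intro z lam hlam
    set μ : ℝ := (M + lam) / 2 with hμdef
    have hμM : M < μ := by rw [hμdef]; linarith
    have hμlam : μ < lam := by rw [hμdef]; linarith
    have hμ0 : (0 : ℝ) ≤ μ := hM0.trans hμM.le
    set u : E := (|T z| - lam • |z|)⁺ with hudef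
    have hu0 : 0 ≤ u := posPart_nonneg _
    have hu : u = 0 := by
      by_contra hne
      have hupos : 0 < u := hu0.lt_of_ne (Ne.symm hne)
      obtain ⟨y, hyF, hy0, hyu⟩ := hdense u hupos
      obtain ⟨K, hK⟩ := exists_nat_ge (max c 1)
      have hKc : c ≤ (K : ℝ) := le_trans (le_max_left c 1) hK
      have key2 : ∀ n : ℕ, n • y ≤ K • |z| := by
        intro n
        set p : E := z⁺ ⊓ n • y with hpdef
        set q : E := z⁻ ⊓ n • y with hqdef
        have hny0 : (0 : E) ≤ n • y := nsmul_nonneg hy0.le n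
        have hp0 : 0 ≤ p := le_inf (posPart_nonneg z) hny0
        have hq0 : 0 ≤ q := le_inf (negPart_nonneg z) hny0
        have hpq : p ⊓ q = 0 :=
          le_antisymm ((inf_le_inf inf_le_left inf_le_left).trans
            (posPart_inf_negPart_eq_zero z).le) (le_inf hp0 hq0)
        set v : E := p - q with hvdef
        have hnyF : (n • y) ∈ F := by
          have h1 : ((n : ℂ)) • y ∈ F := F.smul_mem _ hyF
          rwa [Nat.cast_smul_eq_nsmul] at h1
        have hpF : p ∈ F := by
          refine hideal _ _ hnyF ?_
          rw [stmt15.abs_of_nonneg' hp0, stmt15.abs_of_nonneg' hny0]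
          exact inf_le_right
        have hqF : q ∈ F := by
          refine hideal _ _ hnyF ?_
          rw [stmt15.abs_of_nonneg' hq0, stmt15.abs_of_nonneg' hny0]
          exact inf_le_right
        have hvF : v ∈ F := F.sub_mem hpF hqF
        have habsv : |v| = p + q := by
          have h0 : |p| ⊓ |q| = 0 := by
            rw [stmt15.abs_of_nonneg' hp0, stmt15.abs_of_nonneg' hq0]; exact hpq
          have h1 := stmt15.abs_sub_disj h0
          rw [stmt15.abs_of_nonneg' hp0, stmt15.abs_of_nonneg' hq0] at h1
          rw [hvdef]; exact h1
        have habsvz : |v| ≤ |z| := by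
          rw [habsv, ← posPart_add_negPart z]
          exact add_le_add inf_le_left inf_le_left
        have hP1 : z⁺ - p = (z⁺ - n • y)⁺ := stmt15.sub_inf_eq _ _
        have hP2 : z⁻ - q = (z⁻ - n • y)⁺ := stmt15.sub_inf_eq _ _
        have hP10 : 0 ≤ z⁺ - p := hP1 ▸ posPart_nonneg _
        have hP20 : 0 ≤ z⁻ - q := hP2 ▸ posPart_nonneg _
        have hP1z : z⁺ - p ≤ z⁺ := sub_le_self _ hp0
        have hP2z : z⁻ - q ≤ z⁻ := sub_le_self _ hq0
        have hdisjP : (z⁺ - p) ⊓ (z⁻ - q) = 0 :=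
          le_antisymm ((inf_le_inf hP1z hP2z).trans (posPart_inf_negPart_eq_zero z).le)
            (le_inf hP10 hP20)
        have hzmv : z - v = (z⁺ - p) - (z⁻ - q) := by
          rw [hvdef]
          conv_lhs => rw [← posPart_sub_negPart z]
          abel
        have habszv : |z - v| = (z⁺ - p) + (z⁻ - q) := by
          have h0 : |z⁺ - p| ⊓ |z⁻ - q| = 0 := by
            rw [stmt15.abs_of_nonneg' hP10, stmt15.abs_of_nonneg' hP20]; exact hdisjP
          have h1 := stmt15.abs_sub_disj h0
          rw [stmt15.abs_of_nonneg' hP10, stmt15.abs_of_nonneg' hP20] at h1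
          rw [hzmv]; exact h1
        have hTz : |T z| ≤ |T v| + |T (z - v)| := by
          have h1 : T z = T v + T (z - v) := by
            rw [← map_add]
            congr 1
            abel
          rw [h1]
          exact abs_add_le _ _
        have hTv : |T v| ≤ μ • |z| :=
          (hcore v hvF μ hμM).trans (stmt15.rsmul_mono hμ0 habsvz)
        have hTzv : |T (z - v)| ≤ K • ((z⁺ - p) + (z⁻ - q)) := by
          have h1 := hTc (z - v)
          have h2 : c • |z - v| ≤ K • |z - v| :=
            stmt15.rsmul_le_nsmul hc hKc (abs_nonneg _)
          have h3 := h1.trans h2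
          rwa [habszv] at h3
        have hcomb : |T z| - lam • |z| ≤ K • ((z⁺ - p) + (z⁻ - q)) := by
          have h1 : |T z| ≤ μ • |z| + K • ((z⁺ - p) + (z⁻ - q)) :=
            hTz.trans (add_le_add hTv hTzv)
          have h2 : μ • |z| - lam • |z| ≤ 0 := by
            rw [← sub_smul]
            have h3 : (0 : E) ≤ (lam - μ) • |z| :=
              stmt15.rsmul_nonneg (by linarith) (abs_nonneg z)
            have h4 : (μ - lam) • |z| = -((lam - μ) • |z|) := by
              rw [← neg_smul]; ring_nf
            rw [h4]
            exact neg_nonpos.2 h3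
          calc |T z| - lam • |z|
              ≤ (μ • |z| + K • ((z⁺ - p) + (z⁻ - q))) - lam • |z| :=
                sub_le_sub_right h1 _
            _ = K • ((z⁺ - p) + (z⁻ - q)) + (μ • |z| - lam • |z|) := by abel
            _ ≤ K • ((z⁺ - p) + (z⁻ - q)) + 0 := add_le_add_right h2 _
            _ = K • ((z⁺ - p) + (z⁻ - q)) := add_zero _
        have hule : u ≤ K • ((z⁺ - p) + (z⁻ - q)) := by
          calc u = (|T z| - lam • |z|)⁺ := rfl
            _ ≤ (K • ((z⁺ - p) + (z⁻ - q)))⁺ := posPart_mono hcomb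
            _ = K • ((z⁺ - p) + (z⁻ - q)) :=
                posPart_eq_self.2 (nsmul_nonneg (add_nonneg hP10 hP20) K)
        have hyle : y ≤ K • (y ⊓ (z⁺ - p)) + K • (y ⊓ (z⁻ - q)) := by
          have h1 : y ≤ K • (z⁺ - p) + K • (z⁻ - q) := by
            have h2 := hyu.trans hule
            rwa [smul_add] at h2
          calc y = y ⊓ (K • (z⁺ - p) + K • (z⁻ - q)) := (inf_eq_left.2 h1).symm
            _ ≤ y ⊓ (K • (z⁺ - p)) + y ⊓ (K • (z⁻ - q)) :=
                stmt15.inf_le_add_inf hy0.le (nsmul_nonneg hP10 K) (nsmul_nonneg hP20 K)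
            _ ≤ K • (y ⊓ (z⁺ - p)) + K • (y ⊓ (z⁻ - q)) :=
                add_le_add (stmt15.inf_nsmul_le hy0.le hP10 K)
                  (stmt15.inf_nsmul_le hy0.le hP20 K)
        have hfin1 : n • (y ⊓ (z⁺ - p)) ≤ z⁺ := by
          have h1 : y ⊓ (z⁺ - p) = (z⁺ - n • y)⁺ ⊓ y := by rw [inf_comm, hP1]
          rw [h1]
          exact stmt15.nsmul_posPart_inf_le (posPart_nonneg z) hy0.le n
        have hfin2 : n • (y ⊓ (z⁻ - q)) ≤ z⁻ := by
          have h1 : y ⊓ (z⁻ - q) = (z⁻ - n • y)⁺ ⊓ y := by rw [inf_comm, hP2]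
          rw [h1]
          exact stmt15.nsmul_posPart_inf_le (negPart_nonneg z) hy0.le n
        calc n • y ≤ n • (K • (y ⊓ (z⁺ - p)) + K • (y ⊓ (z⁻ - q))) :=
              nsmul_le_nsmul_right hyle n
          _ = K • (n • (y ⊓ (z⁺ - p))) + K • (n • (y ⊓ (z⁻ - q))) := by
              rw [smul_add, smul_comm n K, smul_comm n K]
          _ ≤ K • z⁺ + K • z⁻ :=
              add_le_add (nsmul_le_nsmul_right hfin1 K) (nsmul_le_nsmul_right hfin2 K)
          _ = K • |z| := by rw [← smul_add, posPart_add_negPart]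
      have hy_zero : y = 0 := by
        have hnorm : ∀ n : ℕ, 0 < n → ‖y‖ ≤ ((K : ℝ) * ‖z‖) / n := by
          intro n hn
          have hn' : (0 : ℝ) < n := by exact_mod_cast hn
          have h1 := key2 n
          have h4 : y ≤ ((1 : ℝ) / n) • (K • |z|) := by
            have h2 : y = ((1 : ℝ) / n) • ((n : ℝ) • y) := by
              rw [smul_smul, one_div_mul_cancel (ne_of_gt hn'), one_smul]
            have h3 : (n : ℝ) • y = n • y := Nat.cast_smul_eq_nsmul ℝ n y
            rw [h2, h3]
            exact stmt15.rsmul_mono (by positivity) h1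
          have h5 : (0 : E) ≤ ((1 : ℝ) / n) • (K • |z|) :=
            stmt15.rsmul_nonneg (by positivity) (nsmul_nonneg (abs_nonneg z) K)
          have h6 : |y| ≤ |((1 : ℝ) / n) • (K • |z|)| := by
            rw [stmt15.abs_of_nonneg' hy0.le, stmt15.abs_of_nonneg' h5]
            exact h4
          have h7 := norm_le_norm_of_abs_le_abs h6
          have h8 : ‖((1 : ℝ) / n) • (K • |z|)‖ = ((K : ℝ) * ‖z‖) / n := by
            rw [norm_smul, Real.norm_eq_abs, abs_of_pos (by positivity)]
            have h9 : ‖(K • |z| : E)‖ = (K : ℝ) * ‖z‖ := by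
              rw [← Nat.cast_smul_eq_nsmul ℝ K, norm_smul, Real.norm_eq_abs,
                abs_of_nonneg (by positivity), norm_abs_eq_norm]
            rw [h9]
            ring
          rw [h8] at h7
          exact h7
        have hlim2 : Tendsto (fun n : ℕ => ((K : ℝ) * ‖z‖) / n) atTop (nhds 0) :=
          tendsto_const_div_atTop_nhds_zero_nat _
        have hy_norm : ‖y‖ ≤ 0 := by
          refine ge_of_tendsto hlim2 ?_
          filter_upwards [eventually_gt_atTop 0] with n hn
          exact hnorm n hn
        exact norm_le_zero_iff.1 hy_norm
      exact hy0.ne' hy_zero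
    have hfinal : |T z| - lam • |z| ≤ 0 := by
      have h1 := le_posPart (|T z| - lam • |z|)
      rw [← hudef, hu] at h1
      exact h1
    exact sub_nonpos.1 hfinal
  have hTM : ‖T‖ ≤ M := by
    refine T.opNorm_le_bound hM0 ?_
    intro z
    have hall : ∀ lam : ℝ, M < lam → ‖T z‖ ≤ lam * ‖z‖ := by
      intro lam hlam
      have hlam0 : (0 : ℝ) ≤ lam := hM0.trans hlam.le
      have h1 := hmain z lam hlam
      have h2 : |T z| ≤ abs (lam • |z|) := by
        rwa [stmt15.abs_of_nonneg' (stmt15.rsmul_nonneg hlam0 (abs_nonneg z))]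
      have h3 := norm_le_norm_of_abs_le_abs h2
      rwa [norm_smul, Real.norm_eq_abs, abs_of_nonneg hlam0, norm_abs_eq_norm] at h3
    have hlim3 : Tendsto (fun k : ℕ => (M + 1 / ((k : ℝ) + 1)) * ‖z‖) atTop
        (nhds (M * ‖z‖)) := by
      have h1 : Tendsto (fun k : ℕ => M + 1 / ((k : ℝ) + 1)) atTop (nhds (M + 0)) :=
        tendsto_const_nhds.add tendsto_one_div_add_atTop_nhds_zero_nat
      rw [add_zero] at h1
      exact h1.mul_const _
    refine ge_of_tendsto hlim3 ?_
    filter_upwards with k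
    refine hall _ ?_
    have h1 : (0 : ℝ) < 1 / ((k : ℝ) + 1) := by positivity
    linarith
  refine le_antisymm ?_ hTM
  refine Real.sSup_le ?_ (norm_nonneg T)
  rintro r ⟨x, ⟨hxF, hx1⟩, rfl⟩
  calc ‖T x‖ ≤ ‖T‖ * ‖x‖ := T.le_opNorm x
    _ ≤ ‖T‖ * 1 := mul_le_mul_of_nonneg_left hx1 (norm_nonneg _)
    _ = ‖T‖ := mul_one _
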